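/- Let P be a 0-1 matrix with k rows, no all-zero column, such that P avoids the pattern [[1,0,1,0],[0,1,0,1]] and its horizontal reflection [[0,1,0,1],[1,0,1,0]], and P has no column whose unique 1-entry in some row r has 1-entries in row r in both the column immediately to its left and the column immediately to its right while those neighboring columns' selected entries are in row r. Then, defining from P the sequence S where S(i) is the row index of a chosen 1 in column i (chosen by the greedy rule: if column i has a unique 1 take its row; otherwise take the topmost row with a 1 in column i differing from S(i-1)), the sequence S avoids abab. Consequently, if S additionally has no three consecutive equal letters, P has at most 4k - 2 columns. -/

import Mathlib

/-- A 0-1 matrix `M` contains the pattern `P` if there are strictly increasing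
row and column maps sending 1-entries of `P` to 1-entries of `M`. -/
def Contains {a b m n : ℕ} (P : Fin a → Fin b → Bool) (M : Fin m → Fin n → Bool) : Prop :=
  ∃ (f : Fin a → Fin m) (g : Fin b → Fin n), StrictMono f ∧ StrictMono g ∧
    ∀ i j, P i j = true → M (f i) (g j) = true

/-- The number of ones of a 0-1 matrix. -/
def ones {m n : ℕ} (M : Fin m → Fin n → Bool) : ℕ :=
  (Finset.univ.filter fun p : Fin m × Fin n => M p.1 p.2 = true).card

/-- The extremal function `ex(n, P)`: the maximum number of ones in an
`n × n` 0-1 matrix avoiding `P`. -/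
noncomputable def exF {a b : ℕ} (n : ℕ) (P : Fin a → Fin b → Bool) : ℕ :=
  sSup {t | ∃ M : Fin n → Fin n → Bool, ¬ Contains P M ∧ ones M = t}

/-- The pattern `[[1,0,1,0],[0,1,0,1]]`. -/
def patQ4 : Fin 2 → Fin 4 → Bool := fun i j => decide ((j : ℕ) % 2 = (i : ℕ))

/-- The pattern `[[0,1,0,1],[1,0,1,0]]`, its reflection over a horizontal line. -/
def patQ4bar : Fin 2 → Fin 4 → Bool := fun i j => decide ((j : ℕ) % 2 ≠ (i : ℕ))


def AbabFree {α : Type*} (L : List α) : Prop :=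
  ∀ a b : α, a ≠ b → ¬ [a, b, a, b].Sublist L

theorem cons_chunk {α : Type*} {s t : List α} (a : α) (A : List α) (h : s.Sublist t) :
    (a :: s).Sublist (A ++ a :: t) :=
  (h.cons₂ a).trans (List.sublist_append_right A (a :: t))

theorem quad_sub {α : Type*} (a b : α) (A B C D E : List α) :
    [a, b, a, b].Sublist (A ++ a :: (B ++ b :: (C ++ a :: (D ++ b :: E)))) :=
  cons_chunk a A (cons_chunk b B (cons_chunk a C (cons_chunk b D (List.nil_sublist E))))

theorem chain_replace {α : Type*} {R : α → α → Prop} {A l₂ l₂' : List α}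
    (h : List.Chain' R (A ++ l₂)) (h' : List.Chain' R l₂') (hh : l₂'.head? = l₂.head?) :
    List.Chain' R (A ++ l₂') := by
  unfold List.Chain' at h h' ⊢
  rw [List.isChain_append] at h ⊢
  exact ⟨h.1, h', fun x hx y hy => h.2.2 x hx y (by rw [hh] at hy; exact hy)⟩

theorem extract2 {α : Type*} {x : α} : ∀ {L : List α}, [x, x].Sublist L →
    ∃ A M B, L = A ++ x :: (M ++ x :: B) := by
  intro L h
  induction L with
  | nil => simp at h
  | cons a L ih =>
    cases h with
    | cons _ h' =>
      obtain ⟨A, M, B, rfl⟩ := ih h'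
      exact ⟨a :: A, M, B, rfl⟩
    | cons_cons _ h' =>
      obtain ⟨M, B, rfl⟩ := List.append_of_mem (List.singleton_sublist.mp h')
      exact ⟨[], M, B, rfl⟩

theorem lemB {α : Type*} [DecidableEq α] :
    ∀ (l : List α) (a : α), (∀ x : α, ¬ [x, x, x].IsInfix (a :: l)) →
      (a :: l).length ≤ 2 * (List.destutter' Ne a l).length
  | [], a, _ => by simp
  | [b], a, _ => by
    by_cases hab : a = b
    · subst hab
      rw [List.destutter'_cons_neg _ (by simp : ¬ Ne a a), List.destutter'_nil]
      simp
    · rw [List.destutter'_cons_pos _ hab, List.destutter'_nil]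
      simp
  | b :: c :: l₂, a, h => by
    by_cases hab : a = b
    · subst hab
      have hac : a ≠ c := by
        rintro rfl
        exact h a ⟨[], l₂, by simp⟩
      rw [List.destutter'_cons_neg _ (by simp : ¬ Ne a a), List.destutter'_cons_pos _ hac]
      have IH := lemB l₂ c (fun x hx => h x (by
        obtain ⟨s, t, he⟩ := hx
        exact ⟨a :: a :: s, t, by simp [he]⟩))
      simp only [List.length_cons] at IH ⊢
      omega
    · rw [List.destutter'_cons_pos _ hab]
      have IH := lemB (c :: l₂) b (fun x hx => h x (by
        obtain ⟨s, t, he⟩ := hx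
        exact ⟨a :: s, t, by simp [he]⟩))
      simp only [List.length_cons] at IH ⊢
      omega

theorem lemB' {α : Type*} [DecidableEq α] (L : List α)
    (h : ∀ x : α, ¬ [x, x, x].IsInfix L) :
    L.length ≤ 2 * (List.destutter Ne L).length := by
  cases L with
  | nil => simp
  | cons a l => rw [List.destutter_cons']; exact lemB l a h

theorem lemA {α : Type*} [DecidableEq α] :
    ∀ (n : ℕ) (L : List α), L.length ≤ n → L.Chain' (· ≠ ·) → AbabFree L →
      L.length ≤ 2 * L.toFinset.card - 1 := by
  intro n
  induction n with
  | zero => intro L h _ _; omega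
  | succ n ih =>
    intro L hlen hch hab
    by_cases hnd : L.Nodup
    · have hc := List.toFinset_card_of_nodup hnd
      omega
    · classical
      obtain ⟨x0, hdup⟩ := List.exists_duplicate_iff_not_nodup.mpr hnd
      have hQ : ∃ m, ∃ (x : α) (A M B : List α), M.length = m ∧ L = A ++ x :: (M ++ x :: B) := by
        obtain ⟨A, M, B, hL⟩ := extract2 (List.duplicate_iff_sublist.mp hdup)
        exact ⟨M.length, x0, A, M, B, rfl, hL⟩
      obtain ⟨x, A, M, B, hMlen, hL⟩ := Nat.find_spec hQ
      have key : ∀ (x' : α) (A' M' B' : List α), L = A' ++ x' :: (M' ++ x' :: B') →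
          M.length ≤ M'.length := by
        intro x' A' M' B' hL'
        by_contra hcon
        push_neg at hcon
        exact Nat.find_min hQ (by omega : M'.length < Nat.find hQ)
          ⟨x', A', M', B', rfl, hL'⟩
      subst hL
      rcases M with _ | ⟨y, M₂⟩
      · exfalso
        have h2 := (List.isChain_append.mp hch).2.1
        simp only [List.nil_append] at h2
        exact (List.isChain_cons_cons.mp h2).1 rfl
      · simp only [List.cons_append] at hch hab key ⊢
        have h2 := (List.isChain_append.mp hch).2.1
        -- h2 : Chain' (x :: y :: (M₂ ++ x :: B))
        have hxy : x ≠ y := (List.isChain_cons_cons.mp h2).1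
        have hyA : y ∉ A := by
          intro hy
          obtain ⟨A₁, A₂, rfl⟩ := List.append_of_mem hy
          refine hab y x (Ne.symm hxy) ?_
          have := quad_sub y x A₁ A₂ [] M₂ B
          simpa using this
        have hyB : y ∉ B := by
          intro hy
          obtain ⟨B₁, B₂, rfl⟩ := List.append_of_mem hy
          refine hab x y hxy ?_
          have := quad_sub x y A [] M₂ B₁ B₂
          simpa using this
        have hyM₂ : y ∉ M₂ := by
          intro hy
          obtain ⟨C, D, rfl⟩ := List.append_of_mem hy
          have := key y (A ++ [x]) C (D ++ x :: B) (by simp)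
          simp at this
        have hxmem : x ∈ ((A ++ x :: (y :: (M₂ ++ x :: B))) : List α).toFinset := by simp
        have hymem : y ∈ ((A ++ x :: (y :: (M₂ ++ x :: B))) : List α).toFinset := by simp
        rcases M₂ with _ | ⟨b, M₃⟩
        · -- L = A ++ x :: y :: x :: B, remove y and one x
          simp only [List.nil_append] at hch hab key hxmem hymem ⊢
          have hsub : (A ++ x :: B).Sublist (A ++ x :: y :: x :: B) := by
            have h1 : B.Sublist (y :: x :: B) :=
              (List.sublist_cons_self x B).trans (List.sublist_cons_self y _)
            exact List.Sublist.append_left (h1.cons₂ x) A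
          have hch' : (A ++ x :: B).Chain' (· ≠ ·) := by
            refine chain_replace hch ?_ rfl
            exact ((List.isChain_cons_cons.mp ((List.isChain_cons_cons.mp
              ((List.isChain_append.mp hch).2.1)).2)).2)
          have hab' : AbabFree (A ++ x :: B) :=
            fun a b hne hs => hab a b hne (hs.trans hsub)
          have hyL' : y ∉ ((A ++ x :: B) : List α).toFinset := by
            simp only [List.toFinset_append, Finset.mem_union, List.mem_toFinset,
              List.mem_cons]
            push_neg
            exact ⟨hyA, Ne.symm hxy, hyB⟩
          have hins : ((A ++ x :: y :: x :: B) : List α).toFinset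
              = insert y ((A ++ x :: B) : List α).toFinset := by
            ext z
            simp only [List.toFinset_append, Finset.mem_union, List.mem_toFinset,
              List.mem_cons, Finset.mem_insert]
            tauto
          have hIH := ih (A ++ x :: B) (by simp at hlen ⊢; omega) hch' hab'
          rw [hins, Finset.card_insert_of_notMem hyL']
          simp only [List.length_append, List.length_cons] at hIH ⊢
          omega
        · -- M₂ = b :: M₃ ; L = A ++ x :: y :: b :: M₃ ++ x :: B, remove y
          simp only [List.cons_append] at hch hab key hxmem hymem ⊢
          have hbx : b ≠ x := by
            rintro rfl
            have := key b A [y] (M₃ ++ b :: B) (by simp)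
            simp at this
          have hsub : ((A ++ x :: b :: (M₃ ++ x :: B)) : List α).Sublist
              (A ++ x :: y :: b :: (M₃ ++ x :: B)) := by
            exact List.Sublist.append_left
              ((List.sublist_cons_self y (b :: (M₃ ++ x :: B))).cons₂ x) A
          have hch' : ((A ++ x :: b :: (M₃ ++ x :: B)) : List α).Chain' (· ≠ ·) := by
            refine chain_replace hch ?_ rfl
            have h3 := (List.isChain_cons_cons.mp h2).2
            have h4 := (List.isChain_cons_cons.mp h3).2
            exact List.isChain_cons_cons.mpr ⟨Ne.symm hbx, h4⟩
          have hab' : AbabFree (A ++ x :: b :: (M₃ ++ x :: B)) :=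
            fun a b' hne hs => hab a b' hne (hs.trans hsub)
          have hyL' : y ∉ ((A ++ x :: b :: (M₃ ++ x :: B)) : List α).toFinset := by
            simp only [List.toFinset_append, Finset.mem_union, List.mem_toFinset,
              List.mem_cons, List.mem_append] at hyM₂ ⊢
            push_neg at hyM₂ ⊢
            exact ⟨hyA, Ne.symm hxy, hyM₂.1, hyM₂.2, Ne.symm hxy, hyB⟩
          have hins : ((A ++ x :: y :: b :: (M₃ ++ x :: B)) : List α).toFinset
              = insert y ((A ++ x :: b :: (M₃ ++ x :: B)) : List α).toFinset := by
            ext z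
            simp only [List.toFinset_append, Finset.mem_union, List.mem_toFinset,
              List.mem_cons, List.mem_append, Finset.mem_insert]
            tauto
          have hcard2 : 2 ≤ ((A ++ x :: y :: b :: (M₃ ++ x :: B)) : List α).toFinset.card := by
            refine Finset.one_lt_card.mpr ⟨x, hxmem, y, hymem, hxy⟩
          have hIH := ih (A ++ x :: b :: (M₃ ++ x :: B)) (by simp at hlen ⊢; omega) hch' hab'
          rw [hins] at hcard2 ⊢
          rw [Finset.card_insert_of_notMem hyL'] at hcard2 ⊢
          simp only [List.length_append, List.length_cons] at hIH ⊢
          omega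

set_option maxHeartbeats 1000000 in
/-- Let `P` be a 0-1 matrix with `k` rows and no all-zero column, avoiding
`[[1,0,1,0],[0,1,0,1]]` and its horizontal reflection, and having no column
whose unique 1-entry, in some row `r`, has 1-entries in row `r` in both
immediately neighboring columns.  Let `S` be the sequence choosing one 1 from
each column by the greedy rule (if the column has a unique 1 take its row; in
the first column take the topmost 1; in a later column with several ones take
the topmost 1 in a row differing from the previous choice).  Then `S` avoids
`abab`; consequently, if `S` has no three consecutive equal letters, then `P`
has at most `4k - 2` columns. -/
theorem stmt_9 (k c : ℕ) (P : Fin k → Fin c → Bool)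
    (hcol : ∀ j, ∃ r, P r j = true)
    (hQ4 : ¬ Contains patQ4 P) (hQ4bar : ¬ Contains patQ4bar P)
    (hno : ¬ ∃ (i : ℕ) (h : i < c) (r : Fin k),
      (P r ⟨i, h⟩ = true ∧ ∀ r', P r' ⟨i, h⟩ = true → r' = r) ∧
      (∃ _h0 : 1 ≤ i, P r ⟨i - 1, by omega⟩ = true) ∧
      (∃ h1 : i + 1 < c, P r ⟨i + 1, h1⟩ = true))
    (S : Fin c → Fin k)
    (hS : ∀ j, P (S j) j = true)
    (hSuniq : ∀ j r, (P r j = true ∧ ∀ r', P r' j = true → r' = r) → S j = r)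
    (hS0 : ∀ (h0 : 0 < c) (r : Fin k), r < S ⟨0, h0⟩ → P r ⟨0, h0⟩ = false)
    (hStop : ∀ (i : ℕ) (h : i + 1 < c), (¬ ∃! r, P r ⟨i + 1, h⟩ = true) →
      S ⟨i + 1, h⟩ ≠ S ⟨i, by omega⟩ ∧
      ∀ r, r < S ⟨i + 1, h⟩ → P r ⟨i + 1, h⟩ = true → r = S ⟨i, by omega⟩) :
    (¬ ∃ i1 i2 i3 i4 : Fin c, i1 < i2 ∧ i2 < i3 ∧ i3 < i4 ∧
      S i1 = S i3 ∧ S i2 = S i4 ∧ S i1 ≠ S i2) ∧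
    ((∀ (i : ℕ) (h : i + 2 < c),
        ¬ (S ⟨i, by omega⟩ = S ⟨i + 1, by omega⟩ ∧ S ⟨i + 1, by omega⟩ = S ⟨i + 2, h⟩)) →
      c ≤ 4 * k - 2) := by
  classical
  have part1 : ¬ ∃ i1 i2 i3 i4 : Fin c, i1 < i2 ∧ i2 < i3 ∧ i3 < i4 ∧
      S i1 = S i3 ∧ S i2 = S i4 ∧ S i1 ≠ S i2 := by
    rintro ⟨i1, i2, i3, i4, h12, h23, h34, e13, e24, hne⟩
    have hg : StrictMono (![i1, i2, i3, i4] : Fin 4 → Fin c) := by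
      intro u v huv
      fin_cases u <;> fin_cases v <;>
        first
          | exact absurd huv (by decide)
          | exact h12 | exact h23 | exact h34
          | exact h12.trans h23 | exact h23.trans h34
          | exact (h12.trans h23).trans h34
    rcases lt_or_gt_of_ne hne with hlt | hlt
    · refine hQ4 ⟨![S i1, S i2], ![i1, i2, i3, i4], ?_, hg, ?_⟩
      · intro u v huv
        fin_cases u <;> fin_cases v <;>
          first
            | exact absurd huv (by decide)
            | exact hlt
      · intro u v huv
        fin_cases u <;> fin_cases v <;>
          first
            | exact absurd huv (by decide)
            | exact hS i1
            | exact hS i2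
            | exact (show P (S i1) i3 = true by rw [e13]; exact hS i3)
            | exact (show P (S i2) i4 = true by rw [e24]; exact hS i4)
    · refine hQ4bar ⟨![S i2, S i1], ![i1, i2, i3, i4], ?_, hg, ?_⟩
      · intro u v huv
        fin_cases u <;> fin_cases v <;>
          first
            | exact absurd huv (by decide)
            | exact hlt
      · intro u v huv
        fin_cases u <;> fin_cases v <;>
          first
            | exact absurd huv (by decide)
            | exact hS i1
            | exact hS i2
            | exact (show P (S i1) i3 = true by rw [e13]; exact hS i3)
            | exact (show P (S i2) i4 = true by rw [e24]; exact hS i4)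
  refine ⟨part1, fun htriple => ?_⟩
  rcases Nat.eq_zero_or_pos c with hc0 | hc0
  · omega
  have hk : 0 < k := (S ⟨0, hc0⟩).pos
  have hlen : (List.ofFn S).length = c := List.length_ofFn
  have habab : AbabFree (List.ofFn S) := by
    rintro a b hne hsub
    obtain ⟨is, hmap, hpw⟩ := List.sublist_eq_map_getElem hsub
    have h4 : is.length = 4 := by
      have := congrArg List.length hmap
      simpa using this.symm
    obtain ⟨j1, j2, j3, j4, rfl⟩ : ∃ j1 j2 j3 j4, is = [j1, j2, j3, j4] := by
      match is, h4 with
      | [j1, j2, j3, j4], _ => exact ⟨j1, j2, j3, j4, rfl⟩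
    simp only [List.map_cons, List.map_nil, Fin.getElem_fin, List.getElem_ofFn, List.cons.injEq] at hmap
    obtain ⟨e1, e2, e3, e4, -⟩ := hmap
    simp only [List.pairwise_cons, List.mem_cons, List.not_mem_nil] at hpw
    apply part1
    refine ⟨Fin.cast hlen j1, Fin.cast hlen j2, Fin.cast hlen j3, Fin.cast hlen j4,
      ?_, ?_, ?_, ?_, ?_, ?_⟩
    · exact hpw.1 j2 (Or.inl rfl)
    · exact hpw.2.1 j3 (Or.inl rfl)
    · exact hpw.2.2.1 j4 (Or.inl rfl)
    · exact e1.symm.trans e3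
    · exact e2.symm.trans e4
    · exact fun h => hne (e1.trans (h.trans e2.symm))
  have htrip : ∀ x : Fin k, ¬ [x, x, x].IsInfix (List.ofFn S) := by
    rintro x ⟨s, t, he⟩
    have hlc : s.length + 2 < c := by
      have := congrArg List.length he
      simp only [List.length_append, List.length_cons, List.length_ofFn,
        List.length_nil] at this
      omega
    have hx : ∀ i, i < 3 → ∀ (h : s.length + i < c), S ⟨s.length + i, h⟩ = x := by
      intro i hi h
      have h1 : s.length + i < (List.ofFn S).length := by rw [hlen]; exact h
      have h2 : (List.ofFn S)[s.length + i] = S ⟨s.length + i, h⟩ :=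
        List.getElem_ofFn h1
      rw [← h2, List.getElem_of_eq he.symm h1,
        List.getElem_append_left
          (by simp only [List.length_append, List.length_cons, List.length_nil]; omega),
        List.getElem_append_right (by omega : s.length ≤ s.length + i)]
      have h3 : s.length + i - s.length = i := by omega
      interval_cases i <;> simp
    refine htriple s.length hlc ⟨?_, ?_⟩
    · exact (hx 0 (by omega) (by omega)).trans (hx 1 (by omega) (by omega)).symm
    · exact (hx 1 (by omega) (by omega)).trans (hx 2 (by omega) (by omega)).symm
  have hDchain : (List.destutter Ne (List.ofFn S)).Chain' (· ≠ ·) :=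
    List.isChain_destutter Ne (List.ofFn S)
  have hDsub := List.destutter_sublist Ne (List.ofFn S)
  have hDab : AbabFree (List.destutter Ne (List.ofFn S)) :=
    fun a b hne hs => habab a b hne (hs.trans hDsub)
  have h2 := lemA (List.destutter Ne (List.ofFn S)).length _ le_rfl hDchain hDab
  have h1 := lemB' (List.ofFn S) htrip
  have h3 : (List.destutter Ne (List.ofFn S)).toFinset.card ≤ k :=
    le_trans (Finset.card_le_univ _) (by simp)
  omega
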